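/- Let G be a connected finite simple graph on n vertices and let r_G := β(G)^{dia(G)}/(2n). Then the polynomial z ↦ I(G,z) is injective on the open disc D(β(G), r_G/2) in the complex plane; in particular, β(G) is the unique root of I(G,z) in this disc. -/

import Mathlib

open Polynomial

open scoped Classical in
/-- `indPolyOn G A` is the independence polynomial (over `ℝ`) of the subgraph of `G`
induced on the vertex set `A`: the sum of `(-1)^|s| • X^|s|` over all independent
sets `s ⊆ A` of `G`.  Equivalently it is `∑ k (-1)^k a_k z^k` where `a_k` is the
number of independent sets of size `k` of the induced subgraph `G[A]`. -/
noncomputable def indPolyOn {V : Type*} [Fintype V] (G : SimpleGraph V) (A : Set V) :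
    Polynomial ℝ :=
  ∑ s ∈ Finset.univ.filter
      (fun s : Finset V => ↑s ⊆ A ∧ ∀ u ∈ s, ∀ v ∈ s, ¬ G.Adj u v),
    ((-1 : ℝ) ^ s.card) • (X : Polynomial ℝ) ^ s.card

/-- The independence polynomial `I(G,z)` of `G`. -/
noncomputable def indPoly {V : Type*} [Fintype V] (G : SimpleGraph V) : Polynomial ℝ :=
  indPolyOn G Set.univ

open scoped Classical

set_option linter.unusedSectionVars false

namespace IndAux

section Comb

variable {V : Type*} [Fintype V] (G : SimpleGraph V)

def NB (G : SimpleGraph V) (v : V) : Set V := G.neighborSet v ∪ {v}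

lemma sum_filter_mem {M : Type*} [AddCommMonoid M] (A : Set V) (v : V) (hv : v ∈ A)
    (f : ℕ → M) :
    ∑ s ∈ Finset.univ.filter
      (fun s : Finset V => (↑s ⊆ A ∧ ∀ u ∈ s, ∀ w ∈ s, ¬ G.Adj u w) ∧ v ∈ s), f s.card
    = ∑ s ∈ Finset.univ.filter
      (fun s : Finset V => ↑s ⊆ A \ NB G v ∧ ∀ u ∈ s, ∀ w ∈ s, ¬ G.Adj u w),
        f (s.card + 1) := by
  apply Finset.sum_nbij' (i := fun s => s.erase v) (j := fun s => insert v s)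
  · intro s hs
    simp only [Finset.mem_filter, Finset.mem_univ, true_and] at hs ⊢
    obtain ⟨⟨hsub, hind⟩, hvs⟩ := hs
    refine ⟨?_, ?_⟩
    · intro u hu
      have hu' := Finset.mem_of_mem_erase hu
      have hne : u ≠ v := Finset.ne_of_mem_erase hu
      refine ⟨hsub hu', ?_⟩
      rintro (hadj | hu_eq)
      · exact hind v hvs u hu' hadj
      · exact hne hu_eq
    · intro u hu w hw
      exact hind u (Finset.mem_of_mem_erase hu) w (Finset.mem_of_mem_erase hw)
  · intro s hs
    simp only [Finset.mem_filter, Finset.mem_univ, true_and] at hs ⊢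
    obtain ⟨hsub, hind⟩ := hs
    have hvns : v ∉ s := fun hmem => (hsub hmem).2 (Or.inr rfl)
    refine ⟨⟨?_, ?_⟩, Finset.mem_insert_self v s⟩
    · intro u hu
      rcases Finset.mem_insert.mp hu with rfl | hu'
      · exact hv
      · exact (hsub hu').1
    · intro u hu w hw
      rcases Finset.mem_insert.mp hu with rfl | hu' <;>
        rcases Finset.mem_insert.mp hw with rfl | hw'
      · exact G.irrefl
      · exact fun hadj => (hsub hw').2 (Or.inl hadj)
      · exact fun hadj => (hsub hu').2 (Or.inl hadj.symm)
      · exact hind u hu' w hw'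
  · intro s hs
    simp only [Finset.mem_filter, Finset.mem_univ, true_and] at hs
    exact Finset.insert_erase hs.2
  · intro s hs
    simp only [Finset.mem_filter, Finset.mem_univ, true_and] at hs
    have hvns : v ∉ s := fun hmem => (hs.1 hmem).2 (Or.inr rfl)
    exact Finset.erase_insert hvns
  · intro s hs
    simp only [Finset.mem_filter, Finset.mem_univ, true_and] at hs
    rw [Finset.card_erase_of_mem hs.2]
    have : 0 < s.card := Finset.card_pos.mpr ⟨v, hs.2⟩
    congr 1
    omega

lemma sum_filter_not_mem {M : Type*} [AddCommMonoid M] (A : Set V) (v : V)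
    (f : Finset V → M) :
    ∑ s ∈ Finset.univ.filter
      (fun s : Finset V => (↑s ⊆ A ∧ ∀ u ∈ s, ∀ w ∈ s, ¬ G.Adj u w) ∧ ¬ v ∈ s), f s
    = ∑ s ∈ Finset.univ.filter
      (fun s : Finset V => ↑s ⊆ A \ {v} ∧ ∀ u ∈ s, ∀ w ∈ s, ¬ G.Adj u w), f s := by
  apply Finset.sum_congr _ (fun _ _ => rfl)
  apply Finset.filter_congr
  intro s _
  constructor
  · rintro ⟨⟨hsub, hind⟩, hvs⟩
    exact ⟨fun u hu => ⟨hsub hu, fun h => hvs (h ▸ hu)⟩, hind⟩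
  · rintro ⟨hsub, hind⟩
    exact ⟨⟨fun u hu => (hsub hu).1, hind⟩, fun hvs => (hsub hvs).2 rfl⟩

lemma delete (A : Set V) (v : V) (hv : v ∈ A) :
    indPolyOn G A = indPolyOn G (A \ {v}) - X * indPolyOn G (A \ NB G v) := by
  unfold indPolyOn
  rw [← Finset.sum_filter_add_sum_filter_not
      (Finset.univ.filter (fun s : Finset V => ↑s ⊆ A ∧ ∀ u ∈ s, ∀ w ∈ s, ¬ G.Adj u w))
      (fun s => v ∉ s)]
  rw [Finset.filter_filter, Finset.filter_filter]
  rw [sum_filter_not_mem G A v]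
  have h2 : ∑ s ∈ Finset.univ.filter
      (fun s : Finset V => (↑s ⊆ A ∧ ∀ u ∈ s, ∀ w ∈ s, ¬ G.Adj u w) ∧ ¬ v ∉ s),
      ((-1 : ℝ) ^ s.card) • (X : Polynomial ℝ) ^ s.card
      = - (X * indPolyOn G (A \ NB G v)) := by
    simp only [not_not]
    rw [sum_filter_mem G A v hv (fun c => ((-1 : ℝ) ^ c) • (X : Polynomial ℝ) ^ c)]
    unfold indPolyOn
    rw [Finset.mul_sum, ← Finset.sum_neg_distrib]
    apply Finset.sum_congr rfl
    intro s _
    rw [pow_succ, pow_succ, Algebra.smul_def, Algebra.smul_def]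
    push_cast
    ring
  rw [h2]
  unfold indPolyOn
  ring

lemma derivIdent (A : Set V) :
    derivative (indPolyOn G A) = - ∑ v ∈ A.toFinset, indPolyOn G (A \ NB G v) := by
  unfold indPolyOn
  rw [derivative_sum]
  have hterm : ∀ s : Finset V, derivative (((-1:ℝ)^s.card) • (X:ℝ[X])^s.card)
      = ∑ v ∈ s, ((-1:ℝ)^s.card) • (X:ℝ[X])^(s.card - 1) := by
    intro s
    rw [derivative_smul, derivative_X_pow, Finset.sum_const, nsmul_eq_mul,
      Algebra.smul_def, Algebra.smul_def, C_eq_natCast]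
    push_cast
    ring
  rw [Finset.sum_congr rfl (fun s _ => hterm s)]
  have hswap : ∀ s : Finset V, (∑ v ∈ s, ((-1:ℝ)^s.card) • (X:ℝ[X])^(s.card - 1))
      = ∑ v ∈ Finset.univ, if v ∈ s then ((-1:ℝ)^s.card) • (X:ℝ[X])^(s.card - 1) else 0 := by
    intro s
    rw [Finset.sum_ite_mem, Finset.univ_inter]
  rw [Finset.sum_congr rfl (fun s _ => hswap s), Finset.sum_comm]
  have hinner : ∀ v : V,
      (∑ s ∈ Finset.univ.filter
        (fun s : Finset V => ↑s ⊆ A ∧ ∀ u ∈ s, ∀ w ∈ s, ¬ G.Adj u w),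
        if v ∈ s then ((-1:ℝ)^s.card) • (X:ℝ[X])^(s.card - 1) else 0)
      = if v ∈ A then - indPolyOn G (A \ NB G v) else 0 := by
    intro v
    rw [← Finset.sum_filter, Finset.filter_filter]
    by_cases hv : v ∈ A
    · rw [if_pos hv]
      rw [sum_filter_mem G A v hv (fun c => ((-1:ℝ)^c) • (X:ℝ[X])^(c - 1))]
      unfold indPolyOn
      rw [← Finset.sum_neg_distrib]
      apply Finset.sum_congr rfl
      intro s _
      simp only [Nat.add_sub_cancel, pow_succ]
      rw [Algebra.smul_def, Algebra.smul_def]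
      push_cast
      ring
    · rw [if_neg hv]
      rw [Finset.filter_false_of_mem, Finset.sum_empty]
      intro s _
      rintro ⟨⟨hsub, -⟩, hvs⟩
      exact hv (hsub hvs)
  rw [Finset.sum_congr rfl (fun v _ => hinner v)]
  have : ∀ v : V, (if v ∈ A then - indPolyOn G (A \ NB G v) else 0)
      = if v ∈ A.toFinset then - indPolyOn G (A \ NB G v) else 0 := by
    intro v; simp [Set.mem_toFinset]
  rw [Finset.sum_congr rfl (fun v _ => this v), Finset.sum_ite_mem, Finset.univ_inter,
    ← Finset.sum_neg_distrib]
  unfold indPolyOn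
  rfl

lemma eval_eq (A : Set V) (x : ℝ) : (indPolyOn G A).eval x
    = ∑ s ∈ Finset.univ.filter
      (fun s : Finset V => ↑s ⊆ A ∧ ∀ u ∈ s, ∀ v ∈ s, ¬ G.Adj u v), (-x) ^ s.card := by
  unfold indPolyOn
  rw [eval_finset_sum]
  apply Finset.sum_congr rfl
  intro s _
  rw [smul_eq_C_mul, eval_mul, eval_C, eval_pow, eval_X, ← mul_pow, neg_one_mul]

lemma empty_mem_filter (A : Set V) : (∅ : Finset V) ∈ Finset.univ.filter
      (fun s : Finset V => ↑s ⊆ A ∧ ∀ u ∈ s, ∀ v ∈ s, ¬ G.Adj u v) := by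
  simp

lemma eval_nonpos_ge {x : ℝ} (hx : x ≤ 0) (A : Set V) : 1 ≤ (indPolyOn G A).eval x := by
  rw [eval_eq]
  have h0 : ∀ s ∈ Finset.univ.filter
      (fun s : Finset V => ↑s ⊆ A ∧ ∀ u ∈ s, ∀ v ∈ s, ¬ G.Adj u v), (0:ℝ) ≤ (-x) ^ s.card :=
    fun s _ => pow_nonneg (by linarith) _
  calc (1:ℝ) = (-x) ^ (∅ : Finset V).card := by simp
  _ ≤ _ := Finset.single_le_sum h0 (empty_mem_filter G A)

lemma eval_zero_eq_one (A : Set V) : (indPolyOn G A).eval 0 = 1 := by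
  rw [eval_eq]
  rw [Finset.sum_eq_single_of_mem ∅ (empty_mem_filter G A)]
  · simp
  · intro s _ hs
    rw [neg_zero, zero_pow]
    simpa using hs

lemma eval_one_singleton (v : V) : (indPolyOn G ({v} : Set V)).eval 1 = 0 := by
  rw [eval_eq]
  have : Finset.univ.filter
      (fun s : Finset V => ↑s ⊆ ({v} : Set V) ∧ ∀ u ∈ s, ∀ w ∈ s, ¬ G.Adj u w)
      = {∅, {v}} := by
    ext s
    simp only [Finset.mem_filter, Finset.mem_univ, true_and, Finset.mem_insert,
      Finset.mem_singleton]
    constructor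
    · rintro ⟨hsub, -⟩
      have : s ⊆ {v} := by
        intro u hu
        have := hsub hu
        simpa using this
      rcases Finset.subset_singleton_iff.mp this with h | h
      · exact Or.inl h
      · exact Or.inr h
    · rintro (rfl | rfl)
      · exact ⟨by simp, by simp⟩
      · refine ⟨by simp, ?_⟩
        intro u hu w hw
        simp only [Finset.mem_singleton] at hu hw
        subst hu; subst hw
        exact G.irrefl
  rw [this]
  rw [Finset.sum_insert (by
    simp only [Finset.mem_singleton]
    intro h
    exact Finset.singleton_ne_empty v h.symm)]
  simp

lemma eval_empty (x : ℝ) : (indPolyOn G (∅ : Set V)).eval x = 1 := by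
  unfold indPolyOn
  have : Finset.univ.filter
      (fun s : Finset V => ↑s ⊆ (∅ : Set V) ∧ ∀ u ∈ s, ∀ v ∈ s, ¬ G.Adj u v)
      = {∅} := by
    ext s
    simp only [Finset.mem_filter, Finset.mem_univ, true_and, Finset.mem_singleton]
    constructor
    · rintro ⟨hsub, -⟩
      ext u
      simp only [Finset.notMem_empty, iff_false]
      intro hu
      exact absurd (hsub hu) (Set.notMem_empty u)
    · rintro rfl
      exact ⟨by simp, by simp⟩
  rw [this]
  simp

def Rset : Set ℝ := {x | 0 ≤ x ∧ ∃ A : Finset V, (indPolyOn G ↑A).eval x = 0}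

lemma beta_facts [Nonempty V] (β : ℝ) (hroot : (indPoly G).eval β = 0)
    (hmin : ∀ x : ℝ, (indPoly G).eval x = 0 → β ≤ x) :
    (∀ A : Set V, 0 ≤ (indPolyOn G A).eval β) ∧ 0 < β ∧ β ≤ 1 := by
  have hβpos : 0 < β := by
    by_contra h
    push_neg at h
    have := eval_nonpos_ge G h (Set.univ : Set V)
    rw [show indPolyOn G (Set.univ : Set V) = indPoly G from rfl, hroot] at this
    linarith
  have hRclosed : IsClosed (Rset G) := by
    have : Rset G = ⋃ (A : Finset V),
        (Set.Ici (0:ℝ) ∩ {x | (indPolyOn G ↑A).eval x = 0}) := by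
      ext x
      simp only [Rset, Set.mem_setOf_eq, Set.mem_iUnion, Set.mem_inter_iff, Set.mem_Ici]
      tauto
    rw [this]
    exact isClosed_iUnion_of_finite fun A =>
      isClosed_Ici.inter (isClosed_eq (Polynomial.continuous _) continuous_const)
  have hβmem : β ∈ Rset G := by
    refine ⟨hβpos.le, Finset.univ, ?_⟩
    rw [Finset.coe_univ]
    exact hroot
  have hbdd : BddBelow (Rset G) := ⟨0, fun x hx => hx.1⟩
  set βs := sInf (Rset G) with hβs_def
  have hβs_mem : βs ∈ Rset G := hRclosed.csInf_mem ⟨β, hβmem⟩ hbdd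
  have hβs_le : βs ≤ β := csInf_le hbdd hβmem
  have hβs0 : 0 ≤ βs := hβs_mem.1
  have NONNEG0 : ∀ x : ℝ, 0 ≤ x → x ≤ βs → ∀ A : Finset V,
      0 ≤ (indPolyOn G (↑A : Set V)).eval x := by
    intro x hx0 hxβs A
    by_contra h
    push_neg at h
    have hcont : ContinuousOn (fun y => (indPolyOn G (↑A : Set V)).eval y) (Set.Icc 0 x) :=
      (Polynomial.continuous _).continuousOn
    have hsub := intermediate_value_Icc' hx0 hcont
    have h0mem : (0:ℝ) ∈ Set.Icc ((indPolyOn G (↑A : Set V)).eval x)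
        ((indPolyOn G (↑A : Set V)).eval 0) := by
      rw [eval_zero_eq_one]
      exact ⟨h.le, zero_le_one⟩
    obtain ⟨y, hy, hy0⟩ := hsub h0mem
    have hyR : y ∈ Rset G := ⟨hy.1, A, hy0⟩
    have : βs ≤ y := csInf_le hbdd hyR
    have hxy : x = y := le_antisymm (by linarith [hy.2]) hy.2
    rw [← hxy] at hy0
    linarith
  have NONNEGset : ∀ x : ℝ, 0 ≤ x → x ≤ βs → ∀ A : Set V, 0 ≤ (indPolyOn G A).eval x := by
    intro x hx0 hx A
    have := NONNEG0 x hx0 hx A.toFinset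
    rwa [Set.coe_toFinset] at this
  -- upward propagation
  obtain ⟨-, A₀, hA₀⟩ := hβs_mem
  have UP : ∀ C : Finset V, (indPolyOn G (↑(A₀ ∪ C) : Set V)).eval βs = 0 := by
    intro C
    induction C using Finset.induction_on with
    | empty => simpa using hA₀
    | @insert w C hw ih =>
      by_cases hwin : w ∈ A₀ ∪ C
      · have : A₀ ∪ insert w C = A₀ ∪ C := by
          ext u
          simp only [Finset.mem_union, Finset.mem_insert]
          constructor
          · rintro (h | rfl | h)
            · exact Or.inl h
            · simpa using hwin
            · exact Or.inr h
          · rintro (h | h)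
            · exact Or.inl h
            · exact Or.inr (Or.inr h)
        rw [this]
        exact ih
      · have hset : (↑(A₀ ∪ insert w C) : Set V) = insert w (↑(A₀ ∪ C) : Set V) := by
          push_cast
          ext u
          simp only [Set.mem_union, Set.mem_insert_iff, Finset.coe_insert]
          tauto
        have hdel := delete G (insert w (↑(A₀ ∪ C) : Set V)) w (Set.mem_insert _ _)
        have h1 : (insert w (↑(A₀ ∪ C) : Set V)) \ {w} = (↑(A₀ ∪ C) : Set V) := by
          rw [Set.insert_diff_of_mem _ (Set.mem_singleton w)]
          exact Set.diff_singleton_eq_self (by simpa using hwin)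
        rw [hset, hdel, h1]
        have heval : (indPolyOn G (↑(A₀ ∪ C) : Set V) -
            X * indPolyOn G ((insert w (↑(A₀ ∪ C) : Set V)) \ NB G w)).eval βs
            = - (βs * (indPolyOn G ((insert w (↑(A₀ ∪ C) : Set V)) \ NB G w)).eval βs) := by
          rw [eval_sub, eval_mul, eval_X, ih]
          ring
        rw [heval]
        have hnn := NONNEGset βs hβs0 le_rfl ((insert w (↑(A₀ ∪ C) : Set V)) \ NB G w)
        have hnn2 := NONNEGset βs hβs0 le_rfl (insert w (↑(A₀ ∪ C) : Set V))
        rw [hdel, h1, heval] at hnn2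
        nlinarith
  have hVuniv : (indPoly G).eval βs = 0 := by
    have h := UP Finset.univ
    have hu : A₀ ∪ Finset.univ = Finset.univ :=
      Finset.union_eq_right.mpr (Finset.subset_univ _)
    rw [hu, Finset.coe_univ] at h
    exact h
  have hββs : β = βs := le_antisymm (hmin βs hVuniv) hβs_le
  refine ⟨?_, hβpos, ?_⟩
  · intro A
    rw [hββs]
    exact NONNEGset βs hβs0 le_rfl A
  · -- β ≤ 1 via singleton
    have hv : ∃ v : V, True := ⟨Classical.arbitrary V, trivial⟩
    obtain ⟨v, -⟩ := hv
    have h1R : (1:ℝ) ∈ Rset G := by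
      refine ⟨zero_le_one, {v}, ?_⟩
      rw [Finset.coe_singleton]
      exact eval_one_singleton G v
    have := csInf_le hbdd h1R
    rw [hββs]
    exact this

section withBeta

variable (β : ℝ) (hβ : 0 < β)
  (hnn : ∀ A : Set V, 0 ≤ (indPolyOn G A).eval β)

lemma eval_delete (A : Set V) (v : V) (hv : v ∈ A) :
    (indPolyOn G A).eval β = (indPolyOn G (A \ {v})).eval β
      - β * (indPolyOn G (A \ NB G v)).eval β := by
  rw [delete G A v hv]
  simp [eval_sub, eval_mul]

include hβ hnn

lemma mono_step (A : Set V) (v : V) (hv : v ∈ A) :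
    (indPolyOn G A).eval β ≤ (indPolyOn G (A \ {v})).eval β := by
  rw [eval_delete G β A v hv]
  have := hnn (A \ NB G v)
  nlinarith

lemma mono (B A : Set V) (hBA : B ⊆ A) :
    (indPolyOn G A).eval β ≤ (indPolyOn G B).eval β := by
  have key : ∀ C : Finset V, (indPolyOn G (B ∪ ↑C)).eval β ≤ (indPolyOn G B).eval β := by
    intro C
    induction C using Finset.induction_on with
    | empty => simp
    | @insert w C hw ih =>
      by_cases hwin : w ∈ B ∪ ↑C
      · have : B ∪ ↑(insert w C) = B ∪ (↑C : Set V) := by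
          rw [Finset.coe_insert]
          rw [Set.union_insert]
          exact Set.insert_eq_self.mpr hwin
        rw [this]; exact ih
      · have hseteq : B ∪ ↑(insert w C) = insert w (B ∪ (↑C : Set V)) := by
          rw [Finset.coe_insert, Set.union_insert]
        rw [hseteq]
        have h1 : (insert w (B ∪ (↑C : Set V))) \ {w} = B ∪ (↑C : Set V) := by
          rw [Set.insert_diff_of_mem _ (Set.mem_singleton w)]
          exact Set.diff_singleton_eq_self hwin
        have := mono_step G β hβ hnn (insert w (B ∪ (↑C : Set V))) w (Set.mem_insert _ _)
        rw [h1] at this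
        exact le_trans this ih
  have := key A.toFinset
  rw [Set.coe_toFinset, Set.union_eq_self_of_subset_left hBA] at this
  exact this

lemma step_out (A : Set V) (v : V) (hv : v ∉ A) :
    β * (indPolyOn G (A \ NB G v)).eval β ≤ (indPolyOn G A).eval β := by
  have hdel := eval_delete G β (insert v A) v (Set.mem_insert _ _)
  have h1 : (insert v A) \ {v} = A := by
    rw [Set.insert_diff_of_mem _ (Set.mem_singleton v)]
    exact Set.diff_singleton_eq_self hv
  have h2 : (insert v A) \ NB G v = A \ NB G v := by
    ext u
    simp only [Set.mem_diff, Set.mem_insert_iff]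
    constructor
    · rintro ⟨rfl | hu, hnb⟩
      · exact absurd (Or.inr rfl) hnb
      · exact ⟨hu, hnb⟩
    · rintro ⟨hu, hnb⟩
      exact ⟨Or.inr hu, hnb⟩
  rw [h1, h2] at hdel
  have := hnn (insert v A)
  rw [hdel] at this
  linarith

lemma walk_bound {x t : V} (W : G.Walk x t) :
    ∀ A : Set V, x ∉ A →
      β ^ (W.length + 1) * (indPolyOn G (A \ NB G t)).eval β ≤ (indPolyOn G A).eval β := by
  induction W with
  | nil =>
    intro A hx
    simpa using step_out G β hβ hnn A _ hx
  | @cons a b c h W ih =>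
    intro A ha
    have hbA : b ∉ A \ NB G a := fun hb => hb.2 (Or.inl h)
    have h1 := ih (A \ NB G a) hbA
    have h2 := step_out G β hβ hnn A a ha
    have h3 : (indPolyOn G (A \ NB G c)).eval β
        ≤ (indPolyOn G ((A \ NB G a) \ NB G c)).eval β :=
      mono G β hβ hnn _ _ (fun u hu => ⟨hu.1.1, hu.2⟩)
    have hb1 : (0:ℝ) ≤ β ^ (W.length + 1) := le_of_lt (pow_pos hβ _)
    calc β ^ (W.cons h).length.succ * (indPolyOn G (A \ NB G c)).eval β
        = β * (β ^ (W.length + 1) * (indPolyOn G (A \ NB G c)).eval β) := by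
          have hlen : (W.cons h).length = W.length + 1 := SimpleGraph.Walk.length_cons h W
          rw [Nat.succ_eq_add_one, hlen, pow_succ]
          ring
      _ ≤ β * (β ^ (W.length + 1) * (indPolyOn G ((A \ NB G a) \ NB G c)).eval β) := by
          apply mul_le_mul_of_nonneg_left _ hβ.le
          exact mul_le_mul_of_nonneg_left h3 hb1
      _ ≤ β * (indPolyOn G (A \ NB G a)).eval β :=
          mul_le_mul_of_nonneg_left h1 hβ.le
      _ ≤ _ := h2

lemma cross (hpre : G.Preconnected) (A : Set V) (hne : A ≠ ∅) (hnuniv : A ≠ Set.univ) :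
    ∃ w a, w ∉ A ∧ a ∈ A ∧ G.Adj w a := by
  obtain ⟨a, ha⟩ := Set.nonempty_iff_ne_empty.mpr hne
  obtain ⟨b, hb⟩ := (Set.ne_univ_iff_exists_notMem A).mp hnuniv
  obtain ⟨W⟩ := hpre b a
  clear hne hnuniv
  induction W with
  | nil => exact absurd ha hb
  | @cons x y z h W ih =>
    by_cases hy : y ∈ A
    · exact ⟨x, y, hb, hy, h⟩
    · exact ih ha hy

lemma pos_of_ne_univ (hpre : G.Preconnected) :
    ∀ (n : ℕ) (A : Set V), A.ncard ≤ n → A ≠ Set.univ →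
      0 < (indPolyOn G A).eval β := by
  intro n
  induction n with
  | zero =>
    intro A hcard _
    have : A = ∅ := by
      have h0 : A.ncard = 0 := Nat.le_zero.mp hcard
      exact (Set.ncard_eq_zero A.toFinite).mp h0
    rw [this, eval_empty]
    norm_num
  | succ n ih =>
    intro A hcard hnuniv
    by_cases hne : A = ∅
    · rw [hne, eval_empty]; norm_num
    · obtain ⟨w, a, hw, ha, hadj⟩ := cross G β hβ hnn hpre A hne hnuniv
      have hstep := step_out G β hβ hnn A w hw
      have hsub : (A \ NB G w).ncard < A.ncard := by
        apply Set.ncard_lt_ncard _ A.toFinite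
        rw [Set.ssubset_iff_of_subset Set.diff_subset]
        exact ⟨a, ha, fun hmem => hmem.2 (Or.inl hadj)⟩
      have hlt : (A \ NB G w).ncard ≤ n := by omega
      have hpos := ih (A \ NB G w) hlt (by
        intro hu
        have : w ∈ A \ NB G w := hu ▸ Set.mem_univ w
        exact this.2 (Or.inr rfl))
      nlinarith

lemma diam_step (hconn : G.Connected) (hβ1 : β ≤ 1) (A : Set V) (u v : V)
    (hdisj : A ∩ NB G u = ∅) (huv : u ≠ v) :
    β ^ G.diam * (indPolyOn G (A \ NB G v)).eval β ≤ (indPolyOn G A).eval β := by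
  have hnt : Nontrivial V := ⟨u, v, huv⟩
  have hediam : G.ediam ≠ ⊤ := by
    obtain ⟨a, b, hab⟩ := SimpleGraph.exists_edist_eq_ediam_of_finite (G := G)
    rw [← hab]
    exact SimpleGraph.edist_ne_top_iff_reachable.mpr (hconn a b)
  have hdist : G.dist u v ≤ G.diam := SimpleGraph.dist_le_diam hediam
  obtain ⟨W, hW⟩ := hconn.exists_walk_length_eq_dist u v
  cases W with
  | nil => exact absurd rfl huv
  | @cons _ b _ h W' =>
    have hbnotA : b ∉ A := by
      intro hb
      have : b ∈ A ∩ NB G u := ⟨hb, Or.inl h⟩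
      rw [hdisj] at this
      exact this
    have hwb := walk_bound G β hβ hnn W' A hbnotA
    have hlen : W'.length + 1 ≤ G.diam := by
      have : (SimpleGraph.Walk.cons h W').length = W'.length + 1 :=
        SimpleGraph.Walk.length_cons h W'
      omega
    have hpow : β ^ G.diam ≤ β ^ (W'.length + 1) :=
      pow_le_pow_of_le_one hβ.le hβ1 hlen
    calc β ^ G.diam * (indPolyOn G (A \ NB G v)).eval β
        ≤ β ^ (W'.length + 1) * (indPolyOn G (A \ NB G v)).eval β :=
          mul_le_mul_of_nonneg_right hpow (hnn _)
      _ ≤ _ := hwb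

lemma deriv_bound (hconn : G.Connected) (hβ1 : β ≤ 1) :
    ∀ (m : ℕ) (A : Set V) (u : V), A ∩ NB G u = ∅ →
    0 ≤ (-1:ℝ)^m * (derivative^[m] (indPolyOn G A)).eval β ∧
    (-1:ℝ)^m * (derivative^[m] (indPolyOn G A)).eval β
      ≤ ((Fintype.card V : ℝ) / β ^ G.diam)^m * (indPolyOn G A).eval β := by
  intro m
  induction m with
  | zero =>
    intro A u hdisj
    simp only [Function.iterate_zero, id_eq, pow_zero, one_mul]
    exact ⟨hnn A, le_refl _⟩
  | succ m ih =>
    intro A u hdisj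
    have huA : u ∉ A := fun hu => by
      have : u ∈ A ∩ NB G u := ⟨hu, Or.inr rfl⟩
      rw [hdisj] at this
      exact this
    have hrw : (-1:ℝ)^(m+1) * (derivative^[m+1] (indPolyOn G A)).eval β
        = ∑ v ∈ A.toFinset, (-1:ℝ)^m * (derivative^[m] (indPolyOn G (A \ NB G v))).eval β := by
      rw [Function.iterate_succ_apply, derivIdent G A, Polynomial.iterate_derivative_neg,
        Polynomial.iterate_derivative_sum, eval_neg, eval_finset_sum, mul_neg,
        Finset.mul_sum, ← Finset.sum_neg_distrib]
      apply Finset.sum_congr rfl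
      intro v _
      rw [pow_succ]
      ring
    rw [hrw]
    constructor
    · apply Finset.sum_nonneg
      intro v hv
      have hvA : v ∈ A := Set.mem_toFinset.mp hv
      exact (ih (A \ NB G v) v (Set.diff_inter_self)).1
    · have hbound : ∀ v ∈ A.toFinset,
          (-1:ℝ)^m * (derivative^[m] (indPolyOn G (A \ NB G v))).eval β
          ≤ ((Fintype.card V : ℝ) / β ^ G.diam)^m * ((indPolyOn G (A \ NB G v)).eval β) := by
        intro v hv
        exact (ih (A \ NB G v) v (Set.diff_inter_self)).2
      have hstep : ∀ v ∈ A.toFinset,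
          (indPolyOn G (A \ NB G v)).eval β ≤ (indPolyOn G A).eval β / β ^ G.diam := by
        intro v hv
        have hvA : v ∈ A := Set.mem_toFinset.mp hv
        have huv : u ≠ v := fun h => huA (h ▸ hvA)
        have := diam_step G β hβ hnn hconn hβ1 A u v hdisj huv
        rw [le_div_iff₀ (pow_pos hβ _)]
        linarith
      have hfactor : (0:ℝ) ≤ ((Fintype.card V : ℝ) / β ^ G.diam)^m :=
        pow_nonneg (div_nonneg (Nat.cast_nonneg _) (pow_pos hβ _).le) _
      calc ∑ v ∈ A.toFinset, (-1:ℝ)^m * (derivative^[m] (indPolyOn G (A \ NB G v))).eval β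
          ≤ ∑ v ∈ A.toFinset,
            ((Fintype.card V : ℝ) / β ^ G.diam)^m * ((indPolyOn G A).eval β / β ^ G.diam) := by
            apply Finset.sum_le_sum
            intro v hv
            exact le_trans (hbound v hv) (mul_le_mul_of_nonneg_left (hstep v hv) hfactor)
        _ = (A.toFinset.card : ℝ) *
            (((Fintype.card V : ℝ) / β ^ G.diam)^m * ((indPolyOn G A).eval β / β ^ G.diam)) := by
            rw [Finset.sum_const, nsmul_eq_mul]
        _ ≤ (Fintype.card V : ℝ) *
            (((Fintype.card V : ℝ) / β ^ G.diam)^m * ((indPolyOn G A).eval β / β ^ G.diam)) := by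
            apply mul_le_mul_of_nonneg_right
            · exact_mod_cast Nat.cast_le.mpr (Finset.card_le_univ _)
            · exact mul_nonneg hfactor (div_nonneg (hnn A) (pow_pos hβ _).le)
        _ = ((Fintype.card V : ℝ) / β ^ G.diam)^(m+1) * (indPolyOn G A).eval β := by
            rw [pow_succ]
            ring

end withBeta

end Comb

lemma ana_main (p : Polynomial ℝ) (β S r K : ℝ)
    (hS : 0 < S) (hr0 : 0 < r) (hK : 0 ≤ K) (hrK : K * r ≤ 1/4)
    (hc1 : (taylor β p).coeff 1 = -S)
    (hck : ∀ k : ℕ, 1 ≤ k → |(taylor β p).coeff k| ≤ K^(k-1) * S / (k.factorial))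
    (hdeg : 1 ≤ p.natDegree) (hroot : p.eval β = 0) :
    Set.InjOn (fun z : ℂ => aeval z p) (Metric.ball (β : ℂ) r) ∧
      ∀ z ∈ Metric.ball (β : ℂ) r, aeval z p = 0 → z = (β : ℂ) := by
  classical
  set c : ℕ → ℝ := fun k => (taylor β p).coeff k with hc
  set N : ℕ := p.natDegree + 1 with hN
  have hNdeg : (taylor β p).natDegree < N := by
    rw [natDegree_taylor]
    omega
  -- expansion
  have hexp : ∀ z : ℂ, aeval z p = ∑ k ∈ Finset.range N, (c k : ℂ) * (z - (β:ℂ))^k := by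
    intro z
    conv_lhs => rw [← sum_taylor_eq p β]
    rw [Polynomial.sum_over_range' _ (fun n => by simp) N hNdeg]
    rw [map_sum]
    apply Finset.sum_congr rfl
    intro k _
    rw [map_mul, map_pow, map_sub, aeval_C, aeval_X]
    norm_num [Complex.coe_algebraMap]
    exact Or.inl rfl
  set Q : ℂ → ℂ → ℂ := fun z w => ∑ k ∈ Finset.range N,
    (c k : ℂ) * ∑ i ∈ Finset.range k, (z - (β:ℂ))^i * (w - (β:ℂ))^(k-1-i) with hQdef
  have hdiff : ∀ z w : ℂ, aeval z p - aeval w p = (z - w) * Q z w := by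
    intro z w
    rw [hexp z, hexp w, ← Finset.sum_sub_distrib, hQdef, Finset.mul_sum]
    apply Finset.sum_congr rfl
    intro k _
    have hgeom := geom_sum₂_mul (z - (β:ℂ)) (w - (β:ℂ)) k
    have hzw : (z - (β:ℂ)) - (w - (β:ℂ)) = z - w := by ring
    rw [hzw] at hgeom
    rw [← mul_sub, ← hgeom]
    ring
  -- bound on Q
  have hQne : ∀ z w : ℂ, z ∈ Metric.ball (β:ℂ) r → w ∈ Metric.ball (β:ℂ) r →
      Q z w ≠ 0 := by
    intro z w hz hw
    have hzr : ‖z - (β:ℂ)‖ ≤ r := by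
      rw [Metric.mem_ball, Complex.dist_eq] at hz
      exact hz.le
    have hwr : ‖w - (β:ℂ)‖ ≤ r := by
      rw [Metric.mem_ball, Complex.dist_eq] at hw
      exact hw.le
    obtain ⟨M, hM⟩ : ∃ M : ℕ, N = M + 2 := ⟨p.natDegree - 1, by omega⟩
    set g : ℕ → ℂ := fun k => (c k : ℂ) *
      ∑ i ∈ Finset.range k, (z - (β:ℂ))^i * (w - (β:ℂ))^(k-1-i) with hg
    have hQE : Q z w = (∑ i ∈ Finset.range M, g (i+2)) + (- S : ℝ) := by
      have h0 : Q z w = ∑ k ∈ Finset.range N, g k := rfl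
      rw [h0, hM, Finset.sum_range_succ', Finset.sum_range_succ']
      have hg0 : g 0 = 0 := by simp [hg]
      have hg1 : g 1 = ((- S : ℝ) : ℂ) := by
        simp [hg, hc1, c]
      rw [hg0, hg1]
      push_cast
      ring
    have hgb : ∀ i ∈ Finset.range M, ‖g (i+2)‖ ≤ S * (1/4)^(i+1) := by
      intro i _
      set k := i + 2 with hk
      have hk1 : 1 ≤ k := by omega
      have habs : ‖g k‖ ≤ |c k| * (k * r^(k-1)) := by
        rw [hg]
        simp only [norm_mul, Complex.norm_real, Real.norm_eq_abs]
        apply mul_le_mul_of_nonneg_left _ (abs_nonneg _)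
        calc ‖∑ i' ∈ Finset.range k, (z - (β:ℂ))^i' * (w - (β:ℂ))^(k-1-i')‖
            ≤ ∑ i' ∈ Finset.range k,
              ‖(z - (β:ℂ))^i' * (w - (β:ℂ))^(k-1-i')‖ :=
              norm_sum_le _ _
          _ ≤ ∑ i' ∈ Finset.range k, r^(k-1) := by
              apply Finset.sum_le_sum
              intro i' hi'
              rw [norm_mul, norm_pow, norm_pow]
              have hi'k : i' + (k - 1 - i') = k - 1 := by
                have := Finset.mem_range.mp hi'
                omega
              calc ‖z - (β:ℂ)‖^i' * ‖w - (β:ℂ)‖^(k-1-i')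
                  ≤ r^i' * r^(k-1-i') := by
                    apply mul_le_mul (pow_le_pow_left₀ (norm_nonneg _) hzr _)
                      (pow_le_pow_left₀ (norm_nonneg _) hwr _)
                      (pow_nonneg (norm_nonneg _) _)
                      (pow_nonneg (le_trans (norm_nonneg _) hzr) _)
                _ = r^(k-1) := by rw [← pow_add, hi'k]
          _ = k * r^(k-1) := by
              rw [Finset.sum_const, Finset.card_range, nsmul_eq_mul]
      have hrnn : (0:ℝ) ≤ r := hr0.le
      have h2 : |c k| * (k * r^(k-1)) ≤ (K^(k-1) * S / k.factorial) * (k * r^(k-1)) := by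
        apply mul_le_mul_of_nonneg_right (hck k hk1)
        positivity
      have h3 : (K^(k-1) * S / k.factorial) * (k * r^(k-1))
          = S * ((K*r)^(k-1) * (k / k.factorial)) := by
        rw [mul_pow]
        ring
      have h4 : (K*r)^(k-1) ≤ (1/4)^(k-1) :=
        pow_le_pow_left₀ (mul_nonneg hK hrnn) hrK _
      have h5 : (k:ℝ) / k.factorial ≤ 1 := by
        rw [div_le_one (by positivity)]
        exact_mod_cast Nat.self_le_factorial k
      have h6 : S * ((K*r)^(k-1) * (k / k.factorial)) ≤ S * ((1/4)^(k-1) * 1) := by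
        apply mul_le_mul_of_nonneg_left _ hS.le
        apply mul_le_mul h4 h5 (by positivity) (by positivity)
      have h7 : ((1:ℝ)/4)^(k-1) = (1/4)^(i+1) := by
        congr 1
      calc ‖g k‖ ≤ |c k| * (k * r^(k-1)) := habs
        _ ≤ (K^(k-1) * S / k.factorial) * (k * r^(k-1)) := h2
        _ = S * ((K*r)^(k-1) * (k / k.factorial)) := h3
        _ ≤ S * ((1/4)^(k-1) * 1) := h6
        _ = S * (1/4)^(i+1) := by rw [h7]; ring
    have hEbound : ‖∑ i ∈ Finset.range M, g (i+2)‖ ≤ S / 3 := by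
      calc ‖∑ i ∈ Finset.range M, g (i+2)‖
          ≤ ∑ i ∈ Finset.range M, ‖g (i+2)‖ := norm_sum_le _ _
        _ ≤ ∑ i ∈ Finset.range M, S * (1/4)^(i+1) := Finset.sum_le_sum hgb
        _ = S * ((1/4) * ∑ i ∈ Finset.range M, (1/4)^i) := by
            rw [Finset.mul_sum, Finset.mul_sum]
            apply Finset.sum_congr rfl
            intro i _
            rw [pow_succ]
            ring
        _ ≤ S / 3 := by
            have hgeo : ∑ i ∈ Finset.range M, ((1:ℝ)/4)^i = ((1/4)^M - 1)/((1/4) - 1) :=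
              geom_sum_eq (by norm_num) M
            have heq : (((1:ℝ)/4)^M - 1)/((1/4:ℝ) - 1) = (1 - (1/4)^M) * (4/3) := by
              ring
            rw [hgeo, heq]
            have hp4 : (0:ℝ) ≤ (1/4)^M := by positivity
            nlinarith
    intro hQ0
    rw [hQ0] at hQE
    have hE : (∑ i ∈ Finset.range M, g (i+2)) = ((S:ℝ):ℂ) := by
      push_cast at hQE ⊢
      linear_combination -hQE
    rw [hE, Complex.norm_real, Real.norm_eq_abs, abs_of_pos hS] at hEbound
    linarith
  -- conclusion
  have hballβ : (β:ℂ) ∈ Metric.ball (β:ℂ) r := Metric.mem_ball_self hr0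
  have hinj : Set.InjOn (fun z : ℂ => aeval z p) (Metric.ball (β : ℂ) r) := by
    intro z hz w hw hzw
    have h0 : aeval z p - aeval w p = 0 := by
      simpa using sub_eq_zero.mpr hzw
    rw [hdiff z w] at h0
    rcases mul_eq_zero.mp h0 with h | h
    · exact sub_eq_zero.mp h
    · exact absurd h (hQne z w hz hw)
  refine ⟨hinj, ?_⟩
  intro z hz hz0
  have hβ0 : aeval ((β:ℝ):ℂ) p = 0 := by
    have := Polynomial.aeval_algebraMap_apply_eq_algebraMap_eval (A := ℂ) β p
    rw [hroot] at this
    simpa [Complex.coe_algebraMap] using this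
  exact hinj hz hballβ (by simp only []; rw [hz0]; exact hβ0.symm)

end IndAux

open IndAux in
/-- Let `G` be a connected graph on `n` vertices and
`r_G := β(G)^{dia(G)}/(2n)`.  Then `I(G,·)` is injective on the open disc
`D(β(G), r_G/2) ⊆ ℂ`; in particular `β(G)` is its unique root there. -/
theorem indPoly_injective_near_beta {V : Type*} [Fintype V]
    (G : SimpleGraph V) (hG : G.Connected)
    (β : ℝ) (hroot : (indPoly G).eval β = 0)
    (hmin : ∀ x : ℝ, (indPoly G).eval x = 0 → β ≤ x)
    (rG : ℝ) (hrG : rG = β ^ G.diam / (2 * Fintype.card V)) :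
    Set.InjOn (fun z : ℂ => aeval z (indPoly G)) (Metric.ball (β : ℂ) (rG / 2)) ∧
      ∀ z ∈ Metric.ball (β : ℂ) (rG / 2), aeval z (indPoly G) = 0 → z = (β : ℂ) := by
  haveI : Nonempty V := hG.nonempty
  obtain ⟨hnn, hβ0, hβ1⟩ := beta_facts G β hroot hmin
  set n : ℕ := Fintype.card V with hn
  have hn0 : 0 < n := Fintype.card_pos
  set d : ℕ := G.diam with hd
  have hβd : (0:ℝ) < β ^ d := pow_pos hβ0 d
  set p : Polynomial ℝ := indPoly G with hp
  set S : ℝ := ∑ u : V, (indPolyOn G (Set.univ \ NB G u)).eval β with hS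
  set K : ℝ := (n : ℝ) / β ^ d with hK
  -- S is positive
  have hterm_nonneg : ∀ u : V, 0 ≤ (indPolyOn G (Set.univ \ NB G u)).eval β :=
    fun u => hnn _
  have hSpos : 0 < S := by
    obtain ⟨u0⟩ := (inferInstance : Nonempty V)
    have hne : (Set.univ \ {u0} : Set V) ≠ Set.univ := by
      intro h
      have : u0 ∈ (Set.univ \ {u0} : Set V) := by rw [h]; trivial
      exact this.2 rfl
    have hpos1 : 0 < (indPolyOn G (Set.univ \ {u0})).eval β :=
      pos_of_ne_univ G β hβ0 hnn hG.preconnected _ _ le_rfl hne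
    have hdel := eval_delete G β Set.univ u0 (Set.mem_univ u0)
    rw [show indPolyOn G (Set.univ : Set V) = indPoly G from rfl, hroot] at hdel
    have hterm0 : 0 < (indPolyOn G (Set.univ \ NB G u0)).eval β := by
      by_contra h
      push_neg at h
      nlinarith
    calc (0:ℝ) < (indPolyOn G (Set.univ \ NB G u0)).eval β := hterm0
      _ ≤ S := Finset.single_le_sum (fun u _ => hterm_nonneg u) (Finset.mem_univ u0)
  have htf : (Set.univ : Set V).toFinset = (Finset.univ : Finset V) := by
    ext x; simp
  have h1 : derivative p = - ∑ v ∈ Finset.univ, indPolyOn G (Set.univ \ NB G v) := by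
    rw [hp]
    unfold indPoly
    rw [derivIdent G Set.univ]
    congr 1
    apply Finset.sum_congr _ (fun _ _ => rfl)
    ext x
    simp [Set.mem_toFinset]
  -- derivative sign and bound at top level
  have htop : ∀ k : ℕ, 1 ≤ k →
      0 ≤ (-1:ℝ)^k * (derivative^[k] p).eval β ∧
      (-1:ℝ)^k * (derivative^[k] p).eval β ≤ K^(k-1) * S := by
    intro k hk
    obtain ⟨m, rfl⟩ : ∃ m, k = m + 1 := ⟨k - 1, by omega⟩
    have hrw : (-1:ℝ)^(m+1) * (derivative^[m+1] p).eval β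
        = ∑ u : V, (-1:ℝ)^m * (derivative^[m] (indPolyOn G (Set.univ \ NB G u))).eval β := by
      rw [Function.iterate_succ_apply, h1,
        Polynomial.iterate_derivative_neg, Polynomial.iterate_derivative_sum, eval_neg,
        eval_finset_sum, mul_neg, Finset.mul_sum, ← Finset.sum_neg_distrib]
      apply Finset.sum_congr rfl
      intro v _
      rw [pow_succ]
      ring
    have hbd := fun u : V => deriv_bound G β hβ0 hnn hG hβ1 m (Set.univ \ NB G u) u
      (Set.diff_inter_self)
    constructor
    · rw [hrw]
      exact Finset.sum_nonneg fun u _ => (hbd u).1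
    · rw [hrw]
      have : ∑ u : V, (-1:ℝ)^m * (derivative^[m] (indPolyOn G (Set.univ \ NB G u))).eval β
          ≤ ∑ u : V, K^m * (indPolyOn G (Set.univ \ NB G u)).eval β := by
        apply Finset.sum_le_sum
        intro u _
        exact (hbd u).2
      calc _ ≤ ∑ u : V, K^m * (indPolyOn G (Set.univ \ NB G u)).eval β := this
        _ = K^m * S := by rw [← Finset.mul_sum]
        _ = K^(m+1-1) * S := by norm_num
  -- coefficient bounds
  have hck : ∀ k : ℕ, 1 ≤ k → |(taylor β p).coeff k| ≤ K^(k-1) * S / (k.factorial) := by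
    intro k hk
    have hco : (taylor β p).coeff k = (hasseDeriv k p).eval β := by
      rw [Polynomial.taylor_coeff]
    have hfac : (derivative^[k] p) = k.factorial • (hasseDeriv k p) := by
      rw [← Polynomial.factorial_smul_hasseDeriv]
      rfl
    have heval : (derivative^[k] p).eval β = (k.factorial : ℝ) * (taylor β p).coeff k := by
      rw [hfac, hco]
      simp [Polynomial.eval_smul, nsmul_eq_mul]
    obtain ⟨hsign, hup⟩ := htop k hk
    have habs : |(derivative^[k] p).eval β| ≤ K^(k-1) * S := by
      rw [abs_le]
      constructor
      · rcases Nat.even_or_odd k with he | ho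
        · rw [he.neg_one_pow, one_mul] at hsign hup
          have : (0:ℝ) ≤ K^(k-1) * S := by positivity
          linarith
        · rw [ho.neg_one_pow, neg_one_mul] at hsign hup
          linarith
      · rcases Nat.even_or_odd k with he | ho
        · rw [he.neg_one_pow, one_mul] at hsign hup
          linarith
        · rw [ho.neg_one_pow, neg_one_mul] at hsign hup
          have : (0:ℝ) ≤ K^(k-1) * S := by positivity
          linarith
    rw [heval] at habs
    rw [abs_mul, abs_of_pos (by exact_mod_cast Nat.factorial_pos k : (0:ℝ) < k.factorial)]
      at habs
    rw [le_div_iff₀ (by exact_mod_cast Nat.factorial_pos k : (0:ℝ) < k.factorial)]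
    linarith [habs]
  -- c1
  have hc1 : (taylor β p).coeff 1 = -S := by
    rw [taylor_coeff_one, h1, eval_neg, eval_finset_sum]
  -- degree
  have hdeg : 1 ≤ p.natDegree := by
    by_contra h
    push_neg at h
    have h0 : p.natDegree = 0 := by omega
    have hpc : p = C (p.coeff 0) := Polynomial.eq_C_of_natDegree_eq_zero h0
    have h1 : p.eval 0 = 1 := eval_zero_eq_one G Set.univ
    rw [hpc] at hroot h1
    simp at hroot h1
    rw [hroot] at h1
    exact one_ne_zero h1.symm
  -- radius facts
  have hr0 : 0 < rG / 2 := by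
    rw [hrG]
    positivity
  have hKnn : 0 ≤ K := by positivity
  have hrK : K * (rG / 2) ≤ 1/4 := by
    rw [hrG, hK]
    rw [show β ^ G.diam = β ^ d from rfl]
    field_simp
    norm_num
  exact ana_main p β S (rG/2) K hSpos hr0 hKnn hrK hc1 hck hdeg hroot
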